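/- Let n = 2^a·q with q odd and m an integer, and let m' = m - n/2 (n even). If a = 1, or a = 2 and m is even, or a > 2 and m is odd, then s₁(m,n) ≢ s₁(m',n) (mod 1), where s₁(m,n) is the class of (4m(m+n)+n(n-1))/(8n) in ℚ/ℤ. -/

import Mathlib

/-- The invariant `s₁(m,n) = (4m(m+n) + n(n-1))/(8n) ∈ ℚ/ℤ`. -/
noncomputable def s₁ (m n : ℤ) : ℚ :=
  (4 * m * (m + n) + n * (n - 1)) / (8 * n)

lemma s1_diff (m k : ℤ) (hk : k ≠ 0) :
    s₁ m (2 * k) - s₁ (m - (2 * k) / 2) (2 * k) = (4 * m + 2 * k) / 8 := by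
  have h : (2 * k) / 2 = k := Int.mul_ediv_cancel_left k (by norm_num)
  rw [h]
  unfold s₁
  have hk' : (k : ℚ) ≠ 0 := Int.cast_ne_zero.mpr hk
  push_cast
  field_simp
  ring

/-- For `n = 2^a·q` with `q` odd and `m' = m - n/2`: if `a = 1`, or `a = 2` and
`m` even, or `a > 2` and `m` odd, then `s₁(m,n) ≢ s₁(m',n) (mod 1)`. -/
theorem s1_distinguishes (a : ℕ) (q m : ℤ) (hq : Odd q) (hq0 : 0 < q)
    (ha : a = 1 ∨ (a = 2 ∧ Even m) ∨ (2 < a ∧ Odd m)) :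
    ¬ ∃ z : ℤ, s₁ m (2 ^ a * q) - s₁ (m - (2 ^ a * q) / 2) (2 ^ a * q) = z := by
  have ha1 : 1 ≤ a := by rcases ha with h | h | h <;> omega
  obtain ⟨b, rfl⟩ : ∃ b, a = b + 1 := ⟨a - 1, by omega⟩
  have hk : (2 : ℤ) ^ b * q ≠ 0 := by positivity
  have hn : (2 : ℤ) ^ (b + 1) * q = 2 * (2 ^ b * q) := by ring
  rintro ⟨z, hz⟩
  rw [hn, s1_diff _ _ hk] at hz
  have hz' : 4 * m + 2 * (2 ^ b * q) = 8 * z := by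
    have : ((4 * m + 2 * (2 ^ b * q) : ℤ) : ℚ) = ((8 * z : ℤ) : ℚ) := by
      push_cast
      field_simp at hz ⊢
      push_cast at hz
      linarith
    exact_mod_cast this
  obtain ⟨c, hc⟩ := hq
  rcases ha with h | ⟨h, hm⟩ | ⟨h, hm⟩
  · -- a = 1, b = 0
    obtain rfl : b = 0 := by omega
    simp at hz'
    omega
  · -- a = 2, b = 1, m even
    obtain rfl : b = 1 := by omega
    obtain ⟨d, hd⟩ := hm
    norm_num at hz'
    omega
  · -- a > 2, b ≥ 2, m odd
    obtain ⟨d, hd⟩ := hm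
    have h8 : (8 : ℤ) ∣ 2 * (2 ^ b * q) := by
      obtain ⟨e, rfl⟩ : ∃ e, b = e + 2 := ⟨b - 2, by omega⟩
      exact ⟨2 ^ e * q, by ring⟩
    obtain ⟨e, he⟩ := h8
    omega
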